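/- For every i with 1 ≤ i ≤ n−2 and all a, b ∈ ℕ, the operators on A satisfy the exchange relation η_i^a ∘ η_{i+1}^{a+b} ∘ η_i^b = η_{i+1}^b ∘ η_i^{a+b} ∘ η_{i+1}^a. -/

import Mathlib

open MvPolynomial LieAlgebra LieAlgebra.SpecialLinear

/-- Index set for the variables `x_{i,j}`, `1 ≤ j < i ≤ n`. -/
abbrev XIdx (n : ℕ) := {p : ℕ × ℕ // 1 ≤ p.2 ∧ p.2 < p.1 ∧ p.1 ≤ n}

/-- The polynomial algebra `A = ℂ[x_{i,j} : 1 ≤ j < i ≤ n]`. -/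
abbrev PolyA (n : ℕ) := MvPolynomial (XIdx n) ℂ

/-- Multiplication by `x_{i,j}` as a linear operator on `A`. -/
noncomputable def mulX (n i j : ℕ) : Module.End ℂ (PolyA n) :=
  if h : 1 ≤ j ∧ j < i ∧ i ≤ n then
    LinearMap.mulLeft ℂ (X (⟨(i, j), h⟩ : XIdx n)) else 0

/-- Partial derivative `∂_{i,j}` as a linear operator on `A`. -/
noncomputable def pd (n i j : ℕ) : Module.End ℂ (PolyA n) :=
  if h : 1 ≤ j ∧ j < i ∧ i ≤ n then
    (pderiv (⟨(i, j), h⟩ : XIdx n)).toLinearMap else 0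

/-- The operator `d_i`. -/
noncomputable def dOp (n : ℕ) (lam : ℕ → ℂ) (i : ℕ) : Module.End ℂ (PolyA n) :=
  (lam i • (1 : Module.End ℂ (PolyA n))
      - ∑ j ∈ Finset.Icc (i+1) n, mulX n j i * pd n j i
      + ∑ j ∈ Finset.Icc (i+2) n, mulX n j (i+1) * pd n j (i+1)) * pd n (i+1) i
    + ∑ j ∈ Finset.Icc 1 (i-1), mulX n i j * pd n (i+1) j
    - ∑ j ∈ Finset.Icc (i+2) n, mulX n j (i+1) * pd n j i

/-- The operator `η_i`. -/
noncomputable def etaOp (n : ℕ) (i : ℕ) : Module.End ℂ (PolyA n) :=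
  mulX n (i+1) i + ∑ j ∈ Finset.Icc 1 (i-1), mulX n (i+1) j * pd n i j

/-- The operator `ζ_i`. -/
noncomputable def zetaOp (n : ℕ) (lam : ℕ → ℂ) (i : ℕ) : Module.End ℂ (PolyA n) :=
  lam i • (1 : Module.End ℂ (PolyA n))
    + ∑ p ∈ Finset.Icc 1 (i-1), (mulX n i p * pd n i p - mulX n (i+1) p * pd n (i+1) p)
    + ∑ j ∈ Finset.Icc (i+2) n, (mulX n j (i+1) * pd n j (i+1) - mulX n j i * pd n j i)
    - (2 : ℂ) • (mulX n (i+1) i * pd n (i+1) i)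

/-- The matrix unit `E_{i,j}` (1-based indices) as an element of `sl(n,ℂ)`. -/
noncomputable def slE (n i j : ℕ) : sl (Fin n) ℂ :=
  if h : i ≠ j ∧ 1 ≤ i ∧ i ≤ n ∧ 1 ≤ j ∧ j ≤ n then
    have hi : i - 1 < n := by omega
    have hj : j - 1 < n := by omega
    LieAlgebra.SpecialLinear.single (⟨i - 1, hi⟩ : Fin n) (⟨j - 1, hj⟩ : Fin n)
      (by simp only [ne_eq, Fin.mk.injEq]; omega) (1 : ℂ)
  else 0

/-- `h_i = E_{i,i} - E_{i+1,i+1}` (1-based index) as an element of `sl(n,ℂ)`. -/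
noncomputable def slH (n i : ℕ) : sl (Fin n) ℂ :=
  if h : 1 ≤ i ∧ i + 1 ≤ n then
    have hi : i - 1 < n := by omega
    have hi' : i < n := by omega
    ⟨Matrix.single (⟨i - 1, hi⟩ : Fin n) (⟨i - 1, hi⟩ : Fin n) (1 : ℂ)
        - Matrix.single (⟨i, hi'⟩ : Fin n) (⟨i, hi'⟩ : Fin n) (1 : ℂ),
      LinearMap.mem_ker.2 (by simp)⟩
  else 0

section Verma
variable {R : Type*} [Ring R]

private lemma y_mul_pow {x y z : R} (hzx : Commute z x) (hyx : y * x = x * y + z) :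
    ∀ k : ℕ, y * x ^ k = x ^ k * y + k • (x ^ (k - 1) * z)
  | 0 => by simp
  | 1 => by simpa using hyx
  | (k+2) => by
    have ih := y_mul_pow hzx hyx (k+1)
    calc y * x ^ (k+2) = (y * x ^ (k+1)) * x := by rw [pow_succ, mul_assoc]
      _ = (x ^ (k+1) * y + (k+1) • (x ^ k * z)) * x := by
            rw [ih]; norm_num
      _ = x ^ (k+1) * (y * x) + (k+1) • (x ^ k * (z * x)) := by
            rw [add_mul, smul_mul_assoc, mul_assoc, mul_assoc]
      _ = x ^ (k+2) * y + (k+2) • (x ^ (k+1) * z) := by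
            rw [hyx, hzx.eq, mul_add, ← mul_assoc, ← pow_succ, ← mul_assoc, ← pow_succ]
            conv_rhs => rw [succ_nsmul]
            abel

private lemma coeff_step (m k j : ℕ) :
    m.choose j * k.choose j * j.factorial * (k - j)
      = m.choose j * k.choose (j+1) * (j+1).factorial := by
  have h := Nat.choose_succ_right_eq k j
  calc m.choose j * k.choose j * j.factorial * (k - j)
      = m.choose j * (k.choose j * (k - j)) * j.factorial := by ring
    _ = m.choose j * (k.choose (j+1) * (j+1)) * j.factorial := by rw [← h]
    _ = m.choose j * k.choose (j+1) * (j+1).factorial := by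
        rw [Nat.factorial_succ]; ring

private lemma normal_form {x y z : R} (hzx : Commute z x) (hzy : Commute z y)
    (hyx : y * x = x * y + z) (k : ℕ) :
    ∀ m : ℕ, y ^ m * x ^ k =
      ∑ j ∈ Finset.range (m+1),
        (m.choose j * k.choose j * j.factorial) • (x ^ (k - j) * y ^ (m - j) * z ^ j) := by
  intro m
  induction m with
  | zero => simp
  | succ m ih =>
    set T : ℕ → R := fun j => x ^ (k - j) * y ^ (m + 1 - j) * z ^ j with hT
    have expand : y ^ (m+1) * x ^ k =
        (∑ j ∈ Finset.range (m+1), (m.choose j * k.choose j * j.factorial) • T j)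
        + ∑ j ∈ Finset.range (m+1),
            (m.choose j * k.choose (j+1) * (j+1).factorial) • T (j+1) := by
      rw [pow_succ', mul_assoc, ih, Finset.mul_sum, ← Finset.sum_add_distrib]
      refine Finset.sum_congr rfl fun j hj => ?_
      have hjm : j ≤ m := by simpa [Nat.lt_succ_iff] using hj
      rw [mul_smul_comm]
      have hy := y_mul_pow hzx hyx (k - j)
      have step : y * (x ^ (k-j) * y ^ (m-j) * z ^ j)
          = T j + (k - j) • T (j+1) := by
        calc y * (x ^ (k-j) * y ^ (m-j) * z ^ j)
            = (y * x ^ (k-j)) * (y ^ (m-j) * z ^ j) := by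
              rw [mul_assoc, mul_assoc]
          _ = (x ^ (k-j) * y) * (y ^ (m-j) * z ^ j)
              + (k-j) • ((x ^ (k-j-1) * z) * (y ^ (m-j) * z ^ j)) := by
              rw [hy, add_mul, smul_mul_assoc]
          _ = T j + (k - j) • T (j+1) := by
              congr 1
              · have : m + 1 - j = (m - j) + 1 := by omega
                rw [hT]; simp only [this]
                rw [pow_succ']
                noncomm_ring
              · congr 1
                have hz : z * y ^ (m-j) = y ^ (m-j) * z := (hzy.pow_right (m-j)).eq
                have : m + 1 - (j+1) = m - j := by omega
                rw [hT]; simp only [this]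
                have : k - (j+1) = k - j - 1 := by omega
                rw [this, pow_succ]
                calc x ^ (k-j-1) * z * (y ^ (m-j) * z ^ j)
                    = x ^ (k-j-1) * ((z * y ^ (m-j)) * z ^ j) := by noncomm_ring
                  _ = x ^ (k-j-1) * (y ^ (m-j) * (z ^ j * z)) := by
                      rw [hz]; simp [mul_assoc, ← pow_succ, ← pow_succ']
                  _ = x ^ (k-j-1) * y ^ (m-j) * (z ^ j * z) := by noncomm_ring
        done
      rw [step, smul_add, smul_smul, coeff_step]
    rw [expand]
    have lhs1 : (∑ j ∈ Finset.range (m+1), (m.choose j * k.choose j * j.factorial) • T j)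
        = (∑ j ∈ Finset.range (m+1),
            (m.choose (j+1) * k.choose (j+1) * (j+1).factorial) • T (j+1)) + T 0 := by
      rw [Finset.sum_range_succ' (fun j => (m.choose j * k.choose j * j.factorial) • T j) m]
      congr 1
      · rw [Finset.sum_range_succ]
        simp [Nat.choose_succ_self]
      · simp
    have rhs1 : (∑ j ∈ Finset.range (m+2),
          ((m+1).choose j * k.choose j * j.factorial) • T j)
        = ((∑ j ∈ Finset.range (m+1),
              (m.choose (j+1) * k.choose (j+1) * (j+1).factorial) • T (j+1))
          + ∑ j ∈ Finset.range (m+1),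
              (m.choose j * k.choose (j+1) * (j+1).factorial) • T (j+1)) + T 0 := by
      rw [Finset.sum_range_succ' (fun j => ((m+1).choose j * k.choose j * j.factorial) • T j)
        (m+1)]
      congr 1
      · rw [← Finset.sum_add_distrib]
        refine Finset.sum_congr rfl fun j hj => ?_
        rw [Nat.choose_succ_succ' (m) (j)]
        rw [add_mul, add_mul, add_smul]
        abel
      · simp
    calc (∑ j ∈ Finset.range (m+1), (m.choose j * k.choose j * j.factorial) • T j)
        + ∑ j ∈ Finset.range (m+1),
            (m.choose j * k.choose (j+1) * (j+1).factorial) • T (j+1)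
        = ∑ j ∈ Finset.range (m+2), ((m+1).choose j * k.choose j * j.factorial) • T j := by
          rw [rhs1, lhs1]; abel
      _ = ∑ j ∈ Finset.range (m+1+1),
            ((m+1).choose j * k.choose j * j.factorial)
              • (x ^ (k - j) * y ^ (m + 1 - j) * z ^ j) := rfl

private lemma verma_exchange {x y z : R} (hzx : Commute z x) (hzy : Commute z y)
    (hyx : y * x = x * y + z) (a b : ℕ) :
    x ^ a * y ^ (a+b) * x ^ b = y ^ b * x ^ (a+b) * y ^ a := by
  rw [mul_assoc, normal_form hzx hzy hyx b (a+b), normal_form hzx hzy hyx (a+b) b,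
    Finset.mul_sum, Finset.sum_mul]
  have hsub : Finset.range (b+1) ⊆ Finset.range (a+b+1) := by
    apply Finset.range_subset_range.2; omega
  rw [← Finset.sum_subset hsub (by
    intro j hj hj'
    have : b < j := by
      simp only [Finset.mem_range, Nat.lt_succ_iff, not_le] at hj' ⊢
      omega
    simp [Nat.choose_eq_zero_of_lt this])]
  refine Finset.sum_congr rfl fun j hj => ?_
  have hjb : j ≤ b := by simpa [Nat.lt_succ_iff] using hj
  rw [mul_smul_comm, smul_mul_assoc]
  have e1 : x ^ a * (x ^ (b - j) * y ^ (a + b - j) * z ^ j)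
      = x ^ (a + b - j) * y ^ (a + b - j) * z ^ j := by
    have : a + (b - j) = a + b - j := by omega
    rw [← mul_assoc, ← mul_assoc, ← pow_add, this]
  have e2 : x ^ (a + b - j) * y ^ (b - j) * z ^ j * y ^ a
      = x ^ (a + b - j) * y ^ (a + b - j) * z ^ j := by
    have hc : z ^ j * y ^ a = y ^ a * z ^ j := (hzy.pow_pow j a).eq
    have hbj : (b - j) + a = a + b - j := by omega
    calc x ^ (a + b - j) * y ^ (b - j) * z ^ j * y ^ a
        = x ^ (a + b - j) * (y ^ (b - j) * (z ^ j * y ^ a)) := by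
          simp only [mul_assoc]
      _ = x ^ (a + b - j) * (y ^ (b - j) * y ^ a) * z ^ j := by
          rw [hc]; simp only [mul_assoc]
      _ = x ^ (a + b - j) * y ^ (a + b - j) * z ^ j := by
          rw [← pow_add, hbj]
  rw [e1, e2, Nat.mul_comm ((a+b).choose j) (b.choose j)]

end Verma

private lemma pderiv_comm' {σ : Type*} (p q : σ) (f : MvPolynomial σ ℂ) :
    pderiv p (pderiv q f) = pderiv q (pderiv p f) := by
  classical
  induction f using MvPolynomial.induction_on with
  | C a => simp
  | add f g hf hg => simp [hf, hg]
  | mul_X f s hf =>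
      simp only [pderiv_mul, pderiv_X, map_add, hf]
      rw [Pi.single_apply, Pi.single_apply]
      split_ifs <;> simp [hf, pderiv_mul] <;> ring

private lemma mulX_commute (n i j k l : ℕ) : Commute (mulX n i j) (mulX n k l) := by
  unfold mulX
  split_ifs <;>
    first
    | exact Commute.zero_left _
    | exact Commute.zero_right _
    | · refine LinearMap.ext fun f => ?_
        simp only [Module.End.mul_apply, LinearMap.mulLeft_apply]
        ring

private lemma pd_commute (n i j k l : ℕ) : Commute (pd n i j) (pd n k l) := by
  unfold pd
  split_ifs <;>
    first
    | exact Commute.zero_left _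
    | exact Commute.zero_right _
    | · refine LinearMap.ext fun f => ?_
        simpa using pderiv_comm' _ _ f

private lemma pd_mulX_commute {n i j k l : ℕ} (h : i ≠ k ∨ j ≠ l) :
    Commute (pd n i j) (mulX n k l) := by
  unfold pd mulX
  split_ifs with h1 h2 h2 <;>
    first
    | exact Commute.zero_left _
    | exact Commute.zero_right _
    | · refine LinearMap.ext fun f => ?_
        have hne : (⟨(k, l), h2⟩ : XIdx n) ≠ ⟨(i, j), h1⟩ := by
          simp only [ne_eq, Subtype.mk.injEq, Prod.mk.injEq, not_and]
          rcases h with h | h <;> intro h' <;> omega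
        simp [Module.End.mul_apply, pderiv_mul, pderiv_X_of_ne hne]

private lemma pd_mulX_self {n i j : ℕ} (h : 1 ≤ j ∧ j < i ∧ i ≤ n) :
    pd n i j * mulX n i j = mulX n i j * pd n i j + 1 := by
  unfold pd mulX
  rw [dif_pos h, dif_pos h]
  refine LinearMap.ext fun f => ?_
  simp [Module.End.mul_apply, pderiv_mul]

private lemma comm3 {Q : Type*} [Ring Q] {A B C E : Q} (hAC : Commute A C)
    (hBC : B * C = C * B + E) : (A * B) * C = C * (A * B) + A * E := by
  calc A * B * C = A * (B * C) := by rw [mul_assoc]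
    _ = A * (C * B) + A * E := by rw [hBC, mul_add]
    _ = (A * C) * B + A * E := by rw [mul_assoc]
    _ = (C * A) * B + A * E := by rw [hAC.eq]
    _ = C * (A * B) + A * E := by rw [mul_assoc]

private lemma comm4 {Q : Type*} [Ring Q] {A B C D E : Q} (hAC : Commute A C)
    (hAD : Commute A D) (hBD : Commute B D) (hBC : B * C = C * B + E) :
    (A * B) * (C * D) = (C * D) * (A * B) + A * E * D := by
  have h1 : B * (C * D) = C * (D * B) + E * D := by
    calc B * (C * D) = (B * C) * D := by rw [mul_assoc]
      _ = C * (B * D) + E * D := by rw [hBC, add_mul, mul_assoc]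
      _ = C * (D * B) + E * D := by rw [hBD.eq]
  have h2 : (C * D) * (A * B) = A * (C * (D * B)) := by
    calc C * D * (A * B) = C * ((D * A) * B) := by simp only [mul_assoc]
      _ = C * ((A * D) * B) := by rw [hAD.eq]
      _ = (C * A) * (D * B) := by simp only [mul_assoc]
      _ = (A * C) * (D * B) := by rw [hAC.eq]
      _ = A * (C * (D * B)) := by rw [mul_assoc]
  calc (A * B) * (C * D) = A * (B * (C * D)) := by rw [mul_assoc]
    _ = A * (C * (D * B)) + A * (E * D) := by rw [h1, mul_add]
    _ = (C * D) * (A * B) + A * E * D := by rw [h2, mul_assoc]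

private lemma commute_mul_mul {Q : Type*} [Ring Q] {A B C D : Q} (h1 : Commute A C)
    (h2 : Commute A D) (h3 : Commute B C) (h4 : Commute B D) : Commute (A*B) (C*D) :=
  (h1.mul_right h2).mul_left (h3.mul_right h4)

private noncomputable def theta (n i : ℕ) : Module.End ℂ (PolyA n) :=
  mulX n (i+2) i + ∑ j ∈ Finset.Icc 1 (i-1), mulX n (i+2) j * pd n i j

private lemma eta_succ (n i : ℕ) : etaOp n (i+1)
    = mulX n (i+2) (i+1) + ∑ j ∈ Finset.Icc 1 i, mulX n (i+2) j * pd n (i+1) j := by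
  rw [etaOp, Nat.add_sub_cancel]

private lemma eta_comm (n i : ℕ) (hi1 : 1 ≤ i) (hn2 : i + 2 ≤ n) :
    etaOp n (i+1) * etaOp n i = etaOp n i * etaOp n (i+1) + theta n i := by
  rw [eta_succ, etaOp, theta]
  set e1 := mulX n (i+1) i with he1
  set e2 := mulX n (i+2) (i+1) with he2
  set S1 := ∑ j ∈ Finset.Icc 1 (i-1), mulX n (i+1) j * pd n i j with hS1
  set S2 := ∑ j ∈ Finset.Icc 1 i, mulX n (i+2) j * pd n (i+1) j with hS2
  have h_e2e1 : Commute e2 e1 := mulX_commute n (i+2) (i+1) (i+1) i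
  have h_e2S1 : Commute e2 S1 := by
    refine Commute.sum_right _ _ _ fun j hj => ?_
    exact (mulX_commute n (i+2) (i+1) (i+1) j).mul_right
      ((pd_mulX_commute (Or.inl (by omega))).symm)
  have hS2e1 : S2 * e1 = e1 * S2 + mulX n (i+2) i := by
    rw [hS2, Finset.sum_mul]
    have step : ∀ j ∈ Finset.Icc 1 i, (mulX n (i+2) j * pd n (i+1) j) * e1
        = e1 * (mulX n (i+2) j * pd n (i+1) j)
          + (if j = i then mulX n (i+2) i else 0) := by
      intro j hj
      by_cases hji : j = i
      · subst hji
        rw [if_pos rfl]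
        have hBC : pd n (j+1) j * mulX n (j+1) j = mulX n (j+1) j * pd n (j+1) j + 1 :=
          pd_mulX_self ⟨by omega, by omega, by omega⟩
        have := comm3 (A := mulX n (j+2) j) (mulX_commute n (j+2) j (j+1) j) hBC
        rw [mul_one] at this
        exact this
      · rw [if_neg hji, add_zero]
        exact ((mulX_commute n (i+2) j (i+1) i).mul_left
          (pd_mulX_commute (Or.inr hji))).eq
    rw [Finset.sum_congr rfl step, Finset.sum_add_distrib, ← Finset.mul_sum,
      Finset.sum_ite_eq' (Finset.Icc 1 i) i, if_pos (by simp [Finset.mem_Icc]; omega)]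
  have hS2S1 : S2 * S1 = S1 * S2 + ∑ k ∈ Finset.Icc 1 (i-1), mulX n (i+2) k * pd n i k := by
    rw [hS2, hS1, Finset.sum_mul]
    have step : ∀ j ∈ Finset.Icc 1 i,
        (mulX n (i+2) j * pd n (i+1) j) * ∑ k ∈ Finset.Icc 1 (i-1), mulX n (i+1) k * pd n i k
        = (∑ k ∈ Finset.Icc 1 (i-1), (mulX n (i+1) k * pd n i k)
            * (mulX n (i+2) j * pd n (i+1) j))
          + ∑ k ∈ Finset.Icc 1 (i-1), (if j = k then mulX n (i+2) j * pd n i k else 0) := by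
      intro j hj
      rw [Finset.mul_sum, ← Finset.sum_add_distrib]
      refine Finset.sum_congr rfl fun k hk => ?_
      simp only [Finset.mem_Icc] at hk hj
      by_cases hjk : j = k
      · subst hjk
        rw [if_pos rfl]
        have hBC : pd n (i+1) j * mulX n (i+1) j = mulX n (i+1) j * pd n (i+1) j + 1 :=
          pd_mulX_self ⟨by omega, by omega, by omega⟩
        have := comm4 (A := mulX n (i+2) j) (D := pd n i j)
          (mulX_commute n (i+2) j (i+1) j)
          ((pd_mulX_commute (Or.inl (by omega))).symm)
          (pd_commute n (i+1) j i j) hBC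
        rw [mul_one] at this
        exact this
      · rw [if_neg hjk, add_zero]
        exact (commute_mul_mul (mulX_commute n (i+2) j (i+1) k)
          ((pd_mulX_commute (Or.inl (by omega))).symm)
          (pd_mulX_commute (Or.inr hjk))
          (pd_commute n (i+1) j i k)).eq
    rw [Finset.sum_congr rfl step, Finset.sum_add_distrib]
    congr 1
    · rw [Finset.sum_comm, Finset.sum_mul]
      refine Finset.sum_congr rfl fun k hk => ?_
      rw [Finset.mul_sum]
    · rw [Finset.sum_comm]
      refine Finset.sum_congr rfl fun k hk => ?_
      rw [Finset.sum_ite_eq' (Finset.Icc 1 i) k, if_pos]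
      simp only [Finset.mem_Icc] at hk ⊢
      omega
  calc (e2 + S2) * (e1 + S1)
      = e2 * e1 + e2 * S1 + (S2 * e1 + S2 * S1) := by rw [add_mul, mul_add, mul_add]
    _ = e1 * e2 + S1 * e2 + ((e1 * S2 + mulX n (i+2) i)
        + (S1 * S2 + ∑ k ∈ Finset.Icc 1 (i-1), mulX n (i+2) k * pd n i k)) := by
        rw [h_e2e1.eq, h_e2S1.eq, hS2e1, hS2S1]
    _ = (e1 + S1) * (e2 + S2)
        + (mulX n (i+2) i + ∑ j ∈ Finset.Icc 1 (i-1), mulX n (i+2) j * pd n i j) := by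
        rw [add_mul, mul_add, mul_add]; abel

private lemma theta_commute_eta (n i : ℕ) : Commute (theta n i) (etaOp n i) := by
  rw [theta, etaOp]
  refine Commute.add_left ?_ ?_
  · refine Commute.add_right (mulX_commute n (i+2) i (i+1) i) ?_
    refine Commute.sum_right _ _ _ fun k hk => ?_
    exact (mulX_commute n (i+2) i (i+1) k).mul_right
      ((pd_mulX_commute (Or.inl (by omega))).symm)
  · refine Commute.sum_left _ _ _ fun k hk => ?_
    refine Commute.add_right ?_ ?_
    · exact (mulX_commute n (i+2) k (i+1) i).mul_left
        (pd_mulX_commute (Or.inl (by omega)))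
    · refine Commute.sum_right _ _ _ fun j hj => ?_
      exact commute_mul_mul (mulX_commute n (i+2) k (i+1) j)
        ((pd_mulX_commute (Or.inl (by omega))).symm)
        (pd_mulX_commute (Or.inl (by omega)))
        (pd_commute n i k i j)

private lemma theta_commute_eta' (n i : ℕ) : Commute (theta n i) (etaOp n (i+1)) := by
  rw [theta, eta_succ]
  refine Commute.add_left ?_ ?_
  · refine Commute.add_right (mulX_commute n (i+2) i (i+2) (i+1)) ?_
    refine Commute.sum_right _ _ _ fun k hk => ?_
    exact (mulX_commute n (i+2) i (i+2) k).mul_right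
      ((pd_mulX_commute (Or.inl (by omega))).symm)
  · refine Commute.sum_left _ _ _ fun k hk => ?_
    simp only [Finset.mem_Icc] at hk
    refine Commute.add_right ?_ ?_
    · exact (mulX_commute n (i+2) k (i+2) (i+1)).mul_left
        (pd_mulX_commute (Or.inl (by omega)))
    · refine Commute.sum_right _ _ _ fun j hj => ?_
      exact commute_mul_mul (mulX_commute n (i+2) k (i+2) j)
        ((pd_mulX_commute (Or.inl (by omega))).symm)
        (pd_mulX_commute (Or.inl (by omega)))
        (pd_commute n i k (i+1) j)

/-- Exchange relation: for `1 ≤ i ≤ n−2` and `a, b ∈ ℕ`,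
`η_i^a ∘ η_{i+1}^{a+b} ∘ η_i^b = η_{i+1}^b ∘ η_i^{a+b} ∘ η_{i+1}^a`. -/
theorem statement8 (n : ℕ) (hn : 3 ≤ n) (i : ℕ) (hi1 : 1 ≤ i) (hi2 : i ≤ n - 2) (a b : ℕ) :
    etaOp n i ^ a * etaOp n (i+1) ^ (a + b) * etaOp n i ^ b
      = etaOp n (i+1) ^ b * etaOp n i ^ (a + b) * etaOp n (i+1) ^ a := by
  have hn2 : i + 2 ≤ n := by omega
  exact verma_exchange (theta_commute_eta n i) (theta_commute_eta' n i)
    (eta_comm n i hi1 hn2) a b
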